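/- Let f ∈ ℂ[z] be a biased Shabat polynomial, i.e. f(0) = 0, f′(0) = 1, and f(u) ∈ {−1, +1} for every u ∈ ℂ with f′(u) = 0. Then every coefficient of f is an algebraic number. -/

import Mathlib

open Polynomial

/-- An unbundled derivation on a `ℂ`-subalgebra-like field `K`, valued in `ℂ`. -/
structure PreDer (K : Type*) [Field K] [Algebra K ℂ] where
  d : K → ℂ
  add' : ∀ a b : K, d (a + b) = d a + d b
  mul' : ∀ a b : K, d (a * b) = algebraMap K ℂ a * d b + algebraMap K ℂ b * d a
  one' : d 1 = 0

namespace PreDer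

variable {K : Type*} [Field K] [Algebra K ℂ] (D : PreDer K)

/-- `d` as an `AddMonoidHom`. -/
def hom : K →+ ℂ := AddMonoidHom.mk' D.d D.add'

@[simp] lemma hom_apply (a : K) : D.hom a = D.d a := rfl

@[simp] lemma d_zero : D.d 0 = 0 := D.hom.map_zero

@[simp] lemma d_one : D.d 1 = 0 := D.one'

lemma d_neg (a : K) : D.d (-a) = - D.d a := D.hom.map_neg a

lemma d_sub (a b : K) : D.d (a - b) = D.d a - D.d b := D.hom.map_sub a b

@[simp] lemma d_neg_one : D.d (-1) = 0 := by rw [D.d_neg, D.d_one, neg_zero]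

/-- Coefficient-wise application of `D` to a polynomial. -/
noncomputable def dmap (p : K[X]) : ℂ[X] := p.sum fun i a => C (D.d a) * X ^ i

@[simp] lemma coeff_dmap (p : K[X]) (k : ℕ) : (D.dmap p).coeff k = D.d (p.coeff k) := by
  rw [dmap, Polynomial.sum, finset_sum_coeff]
  simp only [coeff_C_mul, coeff_X_pow, mul_ite, mul_one, mul_zero]
  simp only [eq_comm (a := k)]
  rw [Finset.sum_ite_eq' p.support k]
  split_ifs with h
  · rfl
  · rw [Polynomial.notMem_support_iff.mp h, D.d_zero]

lemma dmap_add (p q : K[X]) : D.dmap (p + q) = D.dmap p + D.dmap q := by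
  ext k; simp [D.add']

lemma dmap_sub (p q : K[X]) : D.dmap (p - q) = D.dmap p - D.dmap q := by
  ext k; simp [D.d_sub]

@[simp] lemma dmap_C (a : K) : D.dmap (C a) = C (D.d a) := by
  ext k
  rcases eq_or_ne k 0 with rfl | hk
  · simp
  · simp [coeff_C, hk]

@[simp] lemma dmap_X : D.dmap (X : K[X]) = 0 := by
  ext k
  rcases eq_or_ne k 1 with rfl | hk <;> simp [coeff_X, *]
  split_ifs with h
  · exact D.d_one
  · exact D.d_zero

lemma dmap_mul (p q : K[X]) :
    D.dmap (p * q) = p.map (algebraMap K ℂ) * D.dmap q + q.map (algebraMap K ℂ) * D.dmap p := by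
  ext k
  rw [coeff_dmap, coeff_mul, coeff_add, coeff_mul, coeff_mul,
    show D.d (∑ x ∈ Finset.HasAntidiagonal.antidiagonal k, p.coeff x.1 * q.coeff x.2)
      = ∑ x ∈ Finset.HasAntidiagonal.antidiagonal k, D.d (p.coeff x.1 * q.coeff x.2) from
      map_sum D.hom _ _]
  have h2 : ∑ x ∈ Finset.HasAntidiagonal.antidiagonal k,
      (map (algebraMap K ℂ) q).coeff x.1 * (D.dmap p).coeff x.2
      = ∑ x ∈ Finset.HasAntidiagonal.antidiagonal k,
      (map (algebraMap K ℂ) q).coeff x.2 * (D.dmap p).coeff x.1 :=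
    (Finset.Nat.sum_antidiagonal_swap
      (f := fun x => (map (algebraMap K ℂ) q).coeff x.1 * (D.dmap p).coeff x.2)).symm
  rw [h2, ← Finset.sum_add_distrib]
  apply Finset.sum_congr rfl
  intro x _
  simp only [coeff_map, coeff_dmap, D.mul']
lemma d_pow (z : K) (n : ℕ) :
    D.d (z ^ n) = n * (algebraMap K ℂ z) ^ (n - 1) * D.d z := by
  induction n with
  | zero => simp
  | succ n ih =>
    rcases Nat.eq_zero_or_pos n with rfl | hn
    · simp
    · rw [pow_succ, D.mul', ih, map_pow]
      have : (algebraMap K ℂ z) ^ (n - 1) * algebraMap K ℂ z = (algebraMap K ℂ z) ^ n := by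
        rw [← pow_succ]
        congr 1
        omega
      push_cast
      linear_combination (↑n * D.d z) * this

lemma d_eval (z : K) (p : K[X]) :
    D.d (p.eval z) = (D.dmap p).eval (algebraMap K ℂ z)
      + ((p.map (algebraMap K ℂ)).derivative).eval (algebraMap K ℂ z) * D.d z := by
  induction p using Polynomial.induction_on' with
  | add p q hp hq =>
    rw [eval_add, D.add', hp, hq, D.dmap_add, Polynomial.map_add, derivative_add]
    simp only [eval_add]
    ring
  | monomial n a =>
    rw [eval_monomial, D.mul', D.d_pow]
    have h1 : D.dmap (monomial n a) = C (D.d a) * X ^ n := by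
      ext k
      rw [coeff_dmap, coeff_monomial, coeff_C_mul, coeff_X_pow]
      split_ifs with h h' h'
      · simp [h', mul_one]
      · omega
      · omega
      · simp [D.d_zero]
    have h2 : (monomial n a).map (algebraMap K ℂ) = monomial n (algebraMap K ℂ a) :=
      map_monomial _
    rw [h1, h2, derivative_monomial]
    simp only [eval_mul, eval_C, eval_pow, eval_X, eval_monomial, eval_natCast, map_pow]
    ring

lemma dmap_pow (u : K[X]) (n : ℕ) :
    D.dmap (u ^ n) = n * (u.map (algebraMap K ℂ)) ^ (n - 1) * D.dmap u := by
  induction n with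
  | zero =>
    rw [pow_zero, show ((1:K[X])) = C 1 from (map_one C).symm, D.dmap_C, D.d_one]
    simp
  | succ n ih =>
    rcases Nat.eq_zero_or_pos n with rfl | hn
    · simp
    · rw [pow_succ, D.dmap_mul, ih, Polynomial.map_pow]
      have : (u.map (algebraMap K ℂ)) ^ (n - 1) * u.map (algebraMap K ℂ)
          = (u.map (algebraMap K ℂ)) ^ n := by
        rw [← pow_succ]; congr 1; omega
      push_cast
      linear_combination (↑n * D.dmap u) * this

end PreDer
noncomputable section BaseDer

open MvPolynomial

variable {u : Set ℂ}

/-- Evaluation of an `MvPolynomial` at the elements of `u`. -/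
def Aev (u : Set ℂ) : MvPolynomial u ℚ →ₐ[ℚ] ℂ := MvPolynomial.aeval Subtype.val

/-- Partial-derivative-then-evaluate. -/
def Pd (j : u) (r : MvPolynomial u ℚ) : ℂ := Aev u (MvPolynomial.pderiv j r)

lemma Pd_add (j : u) (r s : MvPolynomial u ℚ) : Pd j (r + s) = Pd j r + Pd j s := by
  simp [Pd, map_add]

lemma Pd_mul (j : u) (r s : MvPolynomial u ℚ) :
    Pd j (r * s) = Aev u r * Pd j s + Aev u s * Pd j r := by
  simp only [Pd, MvPolynomial.pderiv_mul, map_add, map_mul]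
  ring

lemma Pd_one (j : u) : Pd j 1 = 0 := by
  simp only [Pd, show (1 : MvPolynomial u ℚ) = MvPolynomial.C 1 from (map_one _).symm,
    MvPolynomial.pderiv_C, map_zero]

lemma Pd_X (j : u) : Pd j (MvPolynomial.X j) = 1 := by
  simp [Pd, MvPolynomial.pderiv_X_self]

/-- Existence of a "fraction" representation with nonzero denominator for elements
of the adjoined field. -/
lemma exists_rep (z : ↥(IntermediateField.adjoin ℚ u)) :
    ∃ rs : MvPolynomial u ℚ × MvPolynomial u ℚ,
      (z : ℂ) = Aev u rs.1 / Aev u rs.2 ∧ Aev u rs.2 ≠ 0 := by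
  obtain ⟨r, s, h⟩ := (IntermediateField.mem_adjoin_iff ℚ (z : ℂ)).mp z.2
  rcases eq_or_ne (Aev u s) 0 with hs | hs
  · refine ⟨⟨0, 1⟩, ?_, ?_⟩
    · have : (z : ℂ) = 0 := by
        rw [h, show MvPolynomial.aeval Subtype.val s = Aev u s from rfl, hs, div_zero]
      rw [this]
      simp [Aev]
    · simp [Aev]
  · exact ⟨⟨r, s⟩, h, hs⟩

variable (j : u)

/-- The value of the base derivation (differentiating the `j`-th basis element). -/
def dval (z : ↥(IntermediateField.adjoin ℚ u)) : ℂ :=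
  (Aev u (Classical.choose (exists_rep z)).2 * Pd j (Classical.choose (exists_rep z)).1
    - Aev u (Classical.choose (exists_rep z)).1 * Pd j (Classical.choose (exists_rep z)).2)
    / (Aev u (Classical.choose (exists_rep z)).2) ^ 2

lemma dval_eq (hu : AlgebraicIndependent ℚ ((↑) : u → ℂ)) (z : ↥(IntermediateField.adjoin ℚ u))
    (r s : MvPolynomial u ℚ) (hz : (z : ℂ) = Aev u r / Aev u s) (hs : Aev u s ≠ 0) :
    dval j z = (Aev u s * Pd j r - Aev u r * Pd j s) / (Aev u s) ^ 2 := by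
  obtain ⟨h1, h2⟩ := Classical.choose_spec (exists_rep z)
  set p := (Classical.choose (exists_rep z)).1 with hp
  set q := (Classical.choose (exists_rep z)).2 with hq
  have hinj : Function.Injective (Aev u) := algebraicIndependent_iff_injective_aeval.mp hu
  have hcross : Aev u p * Aev u s = Aev u r * Aev u q := by
    have := hz ▸ h1
    field_simp at this
    linear_combination -this
  have E1 : p * s = r * q := hinj (by rw [map_mul, map_mul]; exact hcross)
  have E2 : Aev u p * Pd j s + Aev u s * Pd j p = Aev u r * Pd j q + Aev u q * Pd j r := by
    have := congrArg (Pd j) E1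
    rwa [Pd_mul, Pd_mul] at this
  rw [dval, ← hp, ← hq, div_eq_div_iff (pow_ne_zero 2 h2) (pow_ne_zero 2 hs)]
  linear_combination (Aev u q * Aev u s) * E2 -
    (Aev u s * Pd j q + Aev u q * Pd j s) * hcross

end BaseDer
section BaseDerBundle

open MvPolynomial

variable {u : Set ℂ}

/-- The base derivation on `ℚ(u)`, differentiating the `j`-th basis element. -/
noncomputable def baseDer (hu : AlgebraicIndependent ℚ ((↑) : u → ℂ)) (j : u) :
    PreDer ↥(IntermediateField.adjoin ℚ u) where
  d := dval j
  add' := by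
    intro z w
    obtain ⟨⟨r₁, s₁⟩, h₁, hs₁⟩ := exists_rep z
    obtain ⟨⟨r₂, s₂⟩, h₂, hs₂⟩ := exists_rep w
    have hzw : ((z + w : _) : ℂ) = Aev u (r₁ * s₂ + r₂ * s₁) / Aev u (s₁ * s₂) := by
      push_cast
      rw [h₁, h₂, div_add_div _ _ hs₁ hs₂, map_add, map_mul, map_mul, map_mul]
      ring_nf
    have hss : Aev u (s₁ * s₂) ≠ 0 := by rw [map_mul]; exact mul_ne_zero hs₁ hs₂
    rw [dval_eq j hu z r₁ s₁ h₁ hs₁, dval_eq j hu w r₂ s₂ h₂ hs₂,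
      dval_eq j hu (z + w) _ _ hzw hss]
    rw [Pd_add, Pd_mul, Pd_mul, Pd_mul, map_add, map_mul, map_mul, map_mul]
    field_simp
    ring
  mul' := by
    intro z w
    obtain ⟨⟨r₁, s₁⟩, h₁, hs₁⟩ := exists_rep z
    obtain ⟨⟨r₂, s₂⟩, h₂, hs₂⟩ := exists_rep w
    have hzw : ((z * w : _) : ℂ) = Aev u (r₁ * r₂) / Aev u (s₁ * s₂) := by
      push_cast
      rw [h₁, h₂, map_mul, map_mul]
      ring
    have hss : Aev u (s₁ * s₂) ≠ 0 := by rw [map_mul]; exact mul_ne_zero hs₁ hs₂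
    rw [dval_eq j hu z r₁ s₁ h₁ hs₁, dval_eq j hu w r₂ s₂ h₂ hs₂,
      dval_eq j hu (z * w) _ _ hzw hss]
    have haz : (algebraMap ↥(IntermediateField.adjoin ℚ u) ℂ) z = (z : ℂ) := rfl
    have haw : (algebraMap ↥(IntermediateField.adjoin ℚ u) ℂ) w = (w : ℂ) := rfl
    rw [Pd_mul, Pd_mul, map_mul, map_mul, haz, haw, h₁, h₂]
    field_simp
    ring
  one' := by
    have h1 : ((1 : ↥(IntermediateField.adjoin ℚ u)) : ℂ) = Aev u 1 / Aev u 1 := by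
      rw [map_one]; norm_num
    rw [dval_eq j hu 1 1 1 h1 (by rw [map_one]; exact one_ne_zero), Pd_one]
    ring

lemma baseDer_basis (hu : AlgebraicIndependent ℚ ((↑) : u → ℂ)) (j : u) :
    (baseDer hu j).d ⟨(j : ℂ), IntermediateField.subset_adjoin ℚ u j.2⟩ = 1 := by
  have hX : ((⟨(j : ℂ), IntermediateField.subset_adjoin ℚ u j.2⟩ :
      ↥(IntermediateField.adjoin ℚ u)) : ℂ) = Aev u (MvPolynomial.X j) / Aev u 1 := by
    rw [map_one, Aev]
    simp
  show dval j _ = 1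
  rw [dval_eq j hu _ _ _ hX (by rw [map_one]; exact one_ne_zero), Pd_X, Pd_one, map_one, Aev]
  simp

end BaseDerBundle
noncomputable section SimpleExt

open Polynomial IntermediateField

variable (F : IntermediateField ℚ ℂ) (x : ℂ)

lemma charZero_IF : CharZero ↥F :=
  charZero_of_injective_algebraMap (algebraMap ℚ ↥F).injective

lemma minpoly_deriv_eval_ne_zero (hx : IsIntegral ↥F x) :
    (((minpoly ↥F x).map (algebraMap ↥F ℂ)).derivative).eval x ≠ 0 := by
  haveI := charZero_IF F
  set m := minpoly ↥F x with hm
  have hm0 : m ≠ 0 := minpoly.ne_zero hx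
  have hdeg : 1 ≤ m.natDegree := minpoly.natDegree_pos hx
  have hder : m.derivative ≠ 0 := by
    intro h
    have hc : m.derivative.coeff (m.natDegree - 1) = 0 := by rw [h]; simp
    rw [coeff_derivative] at hc
    have h1 : m.natDegree - 1 + 1 = m.natDegree := by omega
    rw [h1] at hc
    rcases mul_eq_zero.mp hc with h2 | h2
    · exact leadingCoeff_ne_zero.mpr hm0 h2
    · have : ((m.natDegree - 1 : ℕ) : ↥F) + 1 ≠ 0 := Nat.cast_add_one_ne_zero _
      exact this h2
  intro h
  rw [derivative_map, eval_map, ← aeval_def] at h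
  have hdvd : m ∣ m.derivative := minpoly.dvd ↥F x h
  exact absurd (Polynomial.degree_le_of_dvd hdvd hder)
    (not_le.mpr (Polynomial.degree_derivative_lt hm0))

/-- The simple extension field `F(x)`, as an intermediate field over `ℚ`. -/
def simpleField : IntermediateField ℚ ℂ :=
  (IntermediateField.adjoin ↥F {x}).restrictScalars ℚ

lemma le_simpleField : F ≤ simpleField F x := by
  intro a ha
  have : a = algebraMap ↥F ℂ ⟨a, ha⟩ := rfl
  rw [this]
  exact (IntermediateField.adjoin ↥F {x}).algebraMap_mem _

lemma mem_simpleField_self : x ∈ simpleField F x :=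
  IntermediateField.mem_adjoin_simple_self ↥F x

lemma exists_poly_rep (hx : IsIntegral ↥F x) (g : ↥(simpleField F x)) :
    ∃ p : Polynomial ↥F, Polynomial.aeval x p = (g : ℂ) := by
  have hg : (g : ℂ) ∈ IntermediateField.adjoin ↥F {x} := g.2
  have h2 : (g : ℂ) ∈ Algebra.adjoin ↥F ({x} : Set ℂ) := by
    rw [← IntermediateField.adjoin_simple_toSubalgebra_of_isAlgebraic hx.isAlgebraic]
    exact hg
  rw [Algebra.adjoin_singleton_eq_range_aeval] at h2
  exact h2

variable (DF : PreDer ↥F)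

/-- The forced value of the extended derivation at `x`. -/
def c0 : ℂ :=
  -((DF.dmap (minpoly ↥F x)).eval x) /
    (((minpoly ↥F x).map (algebraMap ↥F ℂ)).derivative.eval x)

/-- The extension formula. -/
def V (p : Polynomial ↥F) : ℂ :=
  (DF.dmap p).eval x + (((p.map (algebraMap ↥F ℂ)).derivative).eval x) * c0 F x DF

lemma V_minpoly (hx : IsIntegral ↥F x) : V F x DF (minpoly ↥F x) = 0 := by
  have hden := minpoly_deriv_eval_ne_zero F x hx
  rw [derivative_map, eval_map, ← aeval_def] at hden
  rw [V, c0, derivative_map, eval_map, ← aeval_def]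
  field_simp
  ring

lemma map_eval_eq_aeval (p : Polynomial ↥F) :
    (p.map (algebraMap ↥F ℂ)).eval x = Polynomial.aeval x p := by
  rw [eval_map, aeval_def]

lemma V_add (p q : Polynomial ↥F) : V F x DF (p + q) = V F x DF p + V F x DF q := by
  rw [V, V, V, DF.dmap_add, Polynomial.map_add, derivative_add]
  simp only [eval_add]
  ring

lemma V_sub (p q : Polynomial ↥F) : V F x DF (p - q) = V F x DF p - V F x DF q := by
  rw [V, V, V, DF.dmap_sub, Polynomial.map_sub, derivative_sub]
  simp only [eval_sub]
  ring

lemma V_mul (p q : Polynomial ↥F) :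
    V F x DF (p * q) = (Polynomial.aeval x q) * V F x DF p
      + (Polynomial.aeval x p) * V F x DF q := by
  rw [V, V, V, DF.dmap_mul, Polynomial.map_mul, derivative_mul]
  simp only [eval_add, eval_mul, map_eval_eq_aeval]
  ring

lemma V_welldef (hx : IsIntegral ↥F x) (p q : Polynomial ↥F)
    (h : Polynomial.aeval x p = Polynomial.aeval x q) : V F x DF p = V F x DF q := by
  have hd : Polynomial.aeval x (p - q) = 0 := by rw [map_sub, h, sub_self]
  obtain ⟨k, hk⟩ := minpoly.dvd ↥F x hd
  have hVmk : V F x DF (minpoly ↥F x * k) = 0 := by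
    rw [V_mul, V_minpoly F x DF hx, minpoly.aeval, mul_zero, zero_mul, add_zero]
  have := V_sub F x DF p q
  rw [hk, hVmk] at this
  linear_combination -this

/-- The extended pre-derivation on `F(x)`. -/
def simpleDer (hx : IsIntegral ↥F x) : PreDer ↥(simpleField F x) where
  d g := V F x DF (Classical.choose (exists_poly_rep F x hx g))
  add' := by
    intro g₁ g₂
    have h₁ := Classical.choose_spec (exists_poly_rep F x hx g₁)
    have h₂ := Classical.choose_spec (exists_poly_rep F x hx g₂)
    have h₃ := Classical.choose_spec (exists_poly_rep F x hx (g₁ + g₂))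
    have : Polynomial.aeval x (Classical.choose (exists_poly_rep F x hx g₁)
        + Classical.choose (exists_poly_rep F x hx g₂)) = ((g₁ + g₂ : _) : ℂ) := by
      rw [map_add (Polynomial.aeval x), h₁, h₂]; push_cast; ring
    rw [← V_add]
    exact (V_welldef F x DF hx _ _ (h₃.trans this.symm))
  mul' := by
    intro g₁ g₂
    have h₁ := Classical.choose_spec (exists_poly_rep F x hx g₁)
    have h₂ := Classical.choose_spec (exists_poly_rep F x hx g₂)
    have h₃ := Classical.choose_spec (exists_poly_rep F x hx (g₁ * g₂))
    have hmul : Polynomial.aeval x (Classical.choose (exists_poly_rep F x hx g₁)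
        * Classical.choose (exists_poly_rep F x hx g₂)) = ((g₁ * g₂ : _) : ℂ) := by
      rw [map_mul (Polynomial.aeval x), h₁, h₂]; push_cast; ring
    show V F x DF _ = _
    rw [V_welldef F x DF hx _ _ (h₃.trans hmul.symm), V_mul, h₁, h₂]
    have e₁ : (algebraMap ↥(simpleField F x) ℂ) g₁ = (g₁ : ℂ) := rfl
    have e₂ : (algebraMap ↥(simpleField F x) ℂ) g₂ = (g₂ : ℂ) := rfl
    rw [e₁, e₂]
    ring
  one' := by
    have h₃ := Classical.choose_spec (exists_poly_rep F x hx 1)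
    have : Polynomial.aeval x (Polynomial.C (1 : ↥F)) = ((1 : ↥(simpleField F x)) : ℂ) := by
      simp
    show V F x DF _ = 0
    rw [V_welldef F x DF hx _ _ (h₃.trans this.symm), V, DF.dmap_C, DF.d_one, map_C,
      derivative_C]
    simp

lemma simpleDer_ext (hx : IsIntegral ↥F x) (a : ℂ) (ha : a ∈ F)
    (ha' : a ∈ simpleField F x) :
    (simpleDer F x DF hx).d ⟨a, ha'⟩ = DF.d ⟨a, ha⟩ := by
  have h₃ := Classical.choose_spec (exists_poly_rep F x hx ⟨a, ha'⟩)
  have : Polynomial.aeval x (Polynomial.C (⟨a, ha⟩ : ↥F))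
      = ((⟨a, ha'⟩ : ↥(simpleField F x)) : ℂ) := by simp
  show V F x DF _ = _
  rw [V_welldef F x DF hx _ _ (h₃.trans this.symm), V, DF.dmap_C, map_C, derivative_C]
  simp

end SimpleExt
noncomputable section Glue

open Polynomial IntermediateField

lemma coe_poly_eval (M : IntermediateField ℚ ℂ) (q : Polynomial ↥M) (w : ↥M) :
    ((q.eval w : ↥M) : ℂ) = (q.map (algebraMap ↥M ℂ)).eval (w : ℂ) := by
  rw [eval_map]
  exact (Polynomial.eval₂_at_apply (algebraMap ↥M ℂ) w).symm

lemma comp_inclusion_eq {L M : IntermediateField ℚ ℂ} (h : L ≤ M) :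
    (algebraMap ↥M ℂ).comp (IntermediateField.inclusion h).toRingHom = algebraMap ↥L ℂ := by
  ext a
  rfl

lemma map_inclusion_map {L M : IntermediateField ℚ ℂ} (h : L ≤ M) (p : Polynomial ↥L) :
    (p.map (IntermediateField.inclusion h).toRingHom).map (algebraMap ↥M ℂ)
      = p.map (algebraMap ↥L ℂ) := by
  rw [Polynomial.map_map, comp_inclusion_eq]

lemma isIntegral_of_le {L M : IntermediateField ℚ ℂ} (h : L ≤ M) {z : ℂ}
    (hz : IsIntegral ↥L z) : IsIntegral ↥M z := by
  refine ⟨(minpoly ↥L z).map (IntermediateField.inclusion h).toRingHom,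
    (minpoly.monic hz).map _, ?_⟩
  rw [← eval_map, map_inclusion_map, eval_map, ← aeval_def]
  exact minpoly.aeval ↥L z

/-- The global formula for the extension of `DL` to algebraic elements. -/
def gval (L : IntermediateField ℚ ℂ) (DL : PreDer ↥L) (z : ℂ) : ℂ :=
  -((DL.dmap (minpoly ↥L z)).eval z) /
    (((minpoly ↥L z).map (algebraMap ↥L ℂ)).derivative.eval z)

lemma agree {L M : IntermediateField ℚ ℂ} (DL : PreDer ↥L) (DM : PreDer ↥M) (hLM : L ≤ M)
    (hext : ∀ (a : ℂ) (ha : a ∈ L) (ha' : a ∈ M), DM.d ⟨a, ha'⟩ = DL.d ⟨a, ha⟩)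
    (z : ℂ) (hz : z ∈ M) (hzi : IsIntegral ↥L z) :
    DM.d ⟨z, hz⟩ = gval L DL z := by
  set m := minpoly ↥L z with hm
  set q := m.map (IntermediateField.inclusion hLM).toRingHom with hq
  set w : ↥M := ⟨z, hz⟩ with hw
  have hq0 : q.eval w = 0 := by
    have : ((q.eval w : ↥M) : ℂ) = 0 := by
      rw [coe_poly_eval, map_inclusion_map, eval_map, ← aeval_def]
      exact minpoly.aeval ↥L z
    exact Subtype.ext this
  have hdm : DM.dmap q = DL.dmap m := by
    ext k
    rw [PreDer.coeff_dmap, PreDer.coeff_dmap, hq, coeff_map]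
    have h1 : (IntermediateField.inclusion hLM).toRingHom (m.coeff k)
        = ⟨((m.coeff k : ↥L) : ℂ), hLM (m.coeff k).2⟩ := rfl
    rw [h1, hext _ (m.coeff k).2 _]
  have hmm : q.map (algebraMap ↥M ℂ) = m.map (algebraMap ↥L ℂ) := map_inclusion_map hLM m
  have key := DM.d_eval w q
  rw [hq0, DM.d_zero, hdm, hmm] at key
  have hden := minpoly_deriv_eval_ne_zero L z hzi
  have hwz : (algebraMap ↥M ℂ) w = z := rfl
  rw [hwz] at key
  rw [gval, eq_div_iff hden]
  linear_combination -key

/-- Main existence result: a pre-derivation of `ℂ` not vanishing at a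
transcendental element. -/
theorem exists_preDer (t : ℂ) (ht : Transcendental ℚ t) : ∃ D : PreDer ℂ, D.d t ≠ 0 := by
  classical
  -- a transcendence basis containing t
  have hsing : AlgebraicIndependent ℚ ((↑) : ({t} : Set ℂ) → ℂ) := by
    rw [show ((↑) : ({t} : Set ℂ) → ℂ) = fun _ => t by
      funext a; rcases a with ⟨a, ha⟩; simpa using ha]
    exact (algebraicIndependent_unique_type_iff (ι := ↥({t} : Set ℂ))).mpr ht
  obtain ⟨u, htu, hmax⟩ :=
    exists_maximal_algebraicIndependent ({t} : Set ℂ) Set.univ (Set.subset_univ _) hsing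
  have hu : AlgebraicIndependent ℚ ((↑) : u → ℂ) := hmax.prop.1
  have hbasis : IsTranscendenceBasis ℚ ((↑) : u → ℂ) := by
    refine ⟨hu, fun s hs hsub => ?_⟩
    rw [Subtype.range_coe] at hsub ⊢
    exact le_antisymm hsub (hmax.le_of_ge ⟨hs, Set.subset_univ _⟩ hsub)
  set L := IntermediateField.adjoin ℚ u with hL
  have halg : Algebra.IsAlgebraic ↥L ℂ := by
    have := hbasis.isAlgebraic_field
    rwa [Subtype.range_coe] at this
  have hint : ∀ z : ℂ, IsIntegral ↥L z := fun z =>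
    ((halg.isAlgebraic z).isIntegral)
  have htmem : t ∈ u := htu rfl
  set DL := baseDer hu ⟨t, htmem⟩ with hDL
  -- the helper producing a two-element extension
  have hM : ∀ x y : ℂ, ∃ (M : IntermediateField ℚ ℂ) (DM : PreDer ↥M) (hLM : L ≤ M),
      (∀ (a : ℂ) (ha : a ∈ L) (ha' : a ∈ M), DM.d ⟨a, ha'⟩ = DL.d ⟨a, ha⟩)
      ∧ x ∈ M ∧ y ∈ M := by
    intro x y
    set M₁ := simpleField L x with hM₁
    set D₁ := simpleDer L x DL (hint x) with hD₁
    have hle₁ : L ≤ M₁ := le_simpleField L x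
    have hyint : IsIntegral ↥M₁ y := isIntegral_of_le hle₁ (hint y)
    set M₂ := simpleField M₁ y with hM₂
    set D₂ := simpleDer M₁ y D₁ hyint with hD₂
    have hle₂ : M₁ ≤ M₂ := le_simpleField M₁ y
    refine ⟨M₂, D₂, hle₁.trans hle₂, ?_, hle₂ (mem_simpleField_self L x),
      mem_simpleField_self M₁ y⟩
    intro a ha ha'
    rw [simpleDer_ext M₁ y D₁ hyint a (hle₁ ha) ha',
      simpleDer_ext L x DL (hint x) a ha (hle₁ ha)]
  refine ⟨⟨gval L DL, ?_, ?_, ?_⟩, ?_⟩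
  · -- additivity
    intro x y
    obtain ⟨M, DM, hLM, hext, hxM, hyM⟩ := hM x y
    have h1 := agree DL DM hLM hext x hxM (hint x)
    have h2 := agree DL DM hLM hext y hyM (hint y)
    have h3 := agree DL DM hLM hext (x + y) (M.add_mem hxM hyM) (hint (x + y))
    have : (⟨x + y, M.add_mem hxM hyM⟩ : ↥M) = ⟨x, hxM⟩ + ⟨y, hyM⟩ := rfl
    rw [this, DM.add'] at h3
    rw [← h3, h1, h2]
  · -- Leibniz
    intro x y
    obtain ⟨M, DM, hLM, hext, hxM, hyM⟩ := hM x y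
    have h1 := agree DL DM hLM hext x hxM (hint x)
    have h2 := agree DL DM hLM hext y hyM (hint y)
    have h3 := agree DL DM hLM hext (x * y) (M.mul_mem hxM hyM) (hint (x * y))
    have : (⟨x * y, M.mul_mem hxM hyM⟩ : ↥M) = ⟨x, hxM⟩ * ⟨y, hyM⟩ := rfl
    rw [this, DM.mul'] at h3
    have e1 : (algebraMap ↥M ℂ) ⟨x, hxM⟩ = x := rfl
    have e2 : (algebraMap ↥M ℂ) ⟨y, hyM⟩ = y := rfl
    have e3 : (algebraMap ℂ ℂ) x = x := rfl
    have e4 : (algebraMap ℂ ℂ) y = y := rfl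
    rw [e1, e2] at h3
    rw [e3, e4, ← h3, h1, h2]
  · -- one
    have h := agree DL DL (le_refl L) (fun a ha ha' => rfl) 1 L.one_mem (hint 1)
    have : (⟨(1:ℂ), L.one_mem⟩ : ↥L) = 1 := rfl
    rw [this, DL.d_one] at h
    exact h.symm
  · -- nonvanishing at t
    have htL : t ∈ L := IntermediateField.subset_adjoin ℚ u htmem
    have h := agree DL DL (le_refl L) (fun a ha ha' => rfl) t htL (hint t)
    show gval L DL t ≠ 0
    rw [← h]
    have : (⟨t, htL⟩ : ↥L) = ⟨(((⟨t, htmem⟩ : u) : ℂ)),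
        IntermediateField.subset_adjoin ℚ u (⟨t, htmem⟩ : u).2⟩ := rfl
    rw [this, baseDer_basis hu ⟨t, htmem⟩]
    exact one_ne_zero

end Glue
section Main

open Polynomial

/-- Every biased Shabat polynomial has algebraic coefficients: if `f ∈ ℂ[z]`
satisfies `f(0) = 0`, `f'(0) = 1`, and `f(u) ∈ {-1, 1}` whenever `f'(u) = 0`,
then every coefficient of `f` is an algebraic number. -/
theorem biased_shabat_coeffs_algebraic (f : Polynomial ℂ)
    (h0 : f.eval 0 = 0) (h1 : f.derivative.eval 0 = 1)
    (hS : ∀ u : ℂ, f.derivative.eval u = 0 → f.eval u = -1 ∨ f.eval u = 1) :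
    ∀ n : ℕ, IsAlgebraic ℚ (f.coeff n) := by
  intro N
  by_contra hN
  obtain ⟨D, hD⟩ := exists_preDer (f.coeff N) hN
  have hmapid : ∀ p : ℂ[X], p.map (algebraMap ℂ ℂ) = p := by
    intro p
    have : algebraMap ℂ ℂ = RingHom.id ℂ := rfl
    rw [this, Polynomial.map_id]
  have hf' : f.derivative ≠ 0 := by
    intro h
    rw [h, eval_zero] at h1
    exact one_ne_zero h1.symm
  have hn1 : f.natDegree ≠ 0 := by
    intro h
    obtain ⟨a, rfl⟩ := Polynomial.natDegree_eq_zero.mp h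
    exact hf' (derivative_C)
  set Df := D.dmap f with hDf
  have hDf_ne : Df ≠ 0 := by
    intro h
    apply hD
    have : Df.coeff N = 0 := by rw [h]; simp
    rwa [PreDer.coeff_dmap] at this
  have hDfdeg : Df.natDegree ≤ f.natDegree := by
    apply Polynomial.natDegree_le_iff_coeff_eq_zero.mpr
    intro m hm
    rw [PreDer.coeff_dmap, Polynomial.coeff_eq_zero_of_natDegree_lt hm, D.d_zero]
  have hX2 : (X : ℂ[X]) ^ 2 ∣ Df := by
    apply Polynomial.X_pow_dvd_iff.mpr
    intro d hd
    interval_cases d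
    · rw [PreDer.coeff_dmap, ← Polynomial.coeff_zero_eq_eval_zero] at *
      rw [h0, D.d_zero]
    · have hc1 : f.coeff 1 = 1 := by
        have := Polynomial.coeff_derivative f 0
        rw [show f.derivative.coeff 0 = 1 by
          rw [Polynomial.coeff_zero_eq_eval_zero]; exact h1] at this
        push_cast at this
        linear_combination -this
      rw [PreDer.coeff_dmap, hc1, D.d_one]
  -- the key divisibility for each critical point
  have hdvd : ∀ γ ∈ f.derivative.roots.toFinset,
      (X - C γ) ^ (rootMultiplicity γ f.derivative) ∣ Df := by
    intro γ hγ
    rw [Multiset.mem_toFinset, Polynomial.mem_roots hf'] at hγ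
    have hroot : f.derivative.eval γ = 0 := hγ
    have hεcases := hS γ hroot
    -- ε with f.eval γ = ε and D.d ε = 0
    obtain ⟨ε, hε, hDε⟩ : ∃ ε : ℂ, f.eval γ = ε ∧ D.d ε = 0 := by
      rcases hεcases with h | h
      · exact ⟨-1, h, D.d_neg_one⟩
      · exact ⟨1, h, D.d_one⟩
    set g := f - C ε with hg
    have hg' : g.derivative = f.derivative := by
      rw [hg, derivative_sub, derivative_C, sub_zero]
    have hgne : g ≠ 0 := by
      intro h
      rw [← hg', h, derivative_zero] at hf'
      exact hf' rfl
    have hgroot : g.IsRoot γ := by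
      show g.eval γ = 0
      rw [hg, eval_sub, eval_C, hε, sub_self]
    set m := rootMultiplicity γ g with hm
    have hm1 : 1 ≤ m := (Polynomial.rootMultiplicity_pos hgne).mpr hgroot
    have hkey : rootMultiplicity γ f.derivative = m - 1 := by
      rw [← hg']
      exact Polynomial.derivative_rootMultiplicity_of_root hgroot
    obtain ⟨k, hk⟩ := Polynomial.pow_rootMultiplicity_dvd g γ
    have hDg : D.dmap g = Df := by
      rw [hg, D.dmap_sub, D.dmap_C, hDε, map_zero, sub_zero]
    rw [hkey, ← hDg, hk, D.dmap_mul, hmapid, hmapid, D.dmap_pow, hmapid]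
    have hXC : D.dmap (X - C γ) = - C (D.d γ) := by
      rw [D.dmap_sub, D.dmap_X, D.dmap_C, zero_sub]
    rw [hXC]
    apply dvd_add
    · exact Dvd.dvd.mul_right (pow_dvd_pow _ (Nat.sub_le m 1)) _
    · exact (dvd_mul_of_dvd_left (dvd_mul_left _ _) _).mul_left _
  -- assemble the product
  set P := ∏ γ ∈ f.derivative.roots.toFinset,
      (X - C γ) ^ (rootMultiplicity γ f.derivative) with hP
  have hpair : ∀ γ ∈ f.derivative.roots.toFinset, ∀ δ ∈ f.derivative.roots.toFinset,
      γ ≠ δ → IsCoprime ((X - C γ) ^ (rootMultiplicity γ f.derivative))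
        ((X - C δ) ^ (rootMultiplicity δ f.derivative)) := by
    intro γ _ δ _ hne
    exact (Polynomial.pairwise_coprime_X_sub_C (Function.injective_id) hne).pow
  have hPdvd : P ∣ Df :=
    Finset.prod_dvd_of_coprime
      (fun γ hγ δ hδ hne => hpair γ hγ δ hδ hne) (fun γ hγ => hdvd γ hγ)
  have hPX2 : IsCoprime P ((X : ℂ[X]) ^ 2) := by
    apply IsCoprime.prod_left
    intro γ hγ
    rw [Multiset.mem_toFinset, Polynomial.mem_roots hf'] at hγ
    have hγne : γ ≠ 0 := by
      intro h
      subst h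
      exact one_ne_zero ((Eq.symm hγ).trans h1).symm
    have : IsCoprime (X - C γ) ((X : ℂ[X]) - C 0) :=
      Polynomial.pairwise_coprime_X_sub_C (Function.injective_id) hγne
    rw [map_zero, sub_zero] at this
    exact this.pow
  have hPX2dvd : P * X ^ 2 ∣ Df := hPX2.mul_dvd hPdvd hX2
  -- degree computation
  have hPdeg : P.natDegree = f.derivative.natDegree := by
    rw [hP, Polynomial.natDegree_prod_of_monic _ _
      (fun γ _ => (monic_X_sub_C γ).pow _)]
    have : ∀ γ ∈ f.derivative.roots.toFinset,
        ((X - C γ) ^ (rootMultiplicity γ f.derivative)).natDegree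
          = f.derivative.roots.count γ := by
      intro γ _
      rw [Polynomial.natDegree_pow, Polynomial.natDegree_X_sub_C, mul_one,
        Polynomial.count_roots]
    rw [Finset.sum_congr rfl this, Multiset.toFinset_sum_count_eq]
    have hsplit : Polynomial.Splits f.derivative :=
      IsAlgClosed.splits f.derivative
    exact (Polynomial.splits_iff_card_roots.mp hsplit)
  have hfd : f.derivative.natDegree = f.natDegree - 1 := by
    apply Polynomial.natDegree_eq_of_degree_eq_some
    rw [Polynomial.degree_derivative_eq f (Nat.pos_of_ne_zero hn1)]
  have hPmonic : P.Monic :=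
    Polynomial.monic_prod_of_monic _ _ (fun γ _ => (monic_X_sub_C γ).pow _)
  have hPX2deg : (P * X ^ 2).natDegree = f.natDegree + 1 := by
    rw [Polynomial.natDegree_mul hPmonic.ne_zero (pow_ne_zero 2 X_ne_zero), hPdeg, hfd,
      Polynomial.natDegree_pow, Polynomial.natDegree_X]
    omega
  have hle := Polynomial.natDegree_le_of_dvd hPX2dvd hDf_ne
  omega

end Main
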